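/- Every quasi-affine quandle is semiregular; in particular, every subquandle of the affine quandle on a Λ-module M is semiregular, and every displacement of such a subquandle is of the form x ↦ x + m for some m ∈ M. -/

import Mathlib

open LaurentPolynomial

set_option synthInstance.maxHeartbeats 1000000
set_option maxHeartbeats 1000000

noncomputable section

/-- The ring `Λ = ℤ[t,t⁻¹]` of Laurent polynomials with integer coefficients. -/
abbrev Λ : Type := LaurentPolynomial ℤ

/-- The variable `t ∈ Λ`. -/
abbrev tL : Λ := T 1

/-- A medial quandle structure on a type `Q`: an idempotent binary operation whose right
translations are bijections, satisfying the medial law. -/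
structure MedialQuandleStr (Q : Type*) where
  op : Q → Q → Q
  idem : ∀ x, op x x = x
  bij : ∀ y, Function.Bijective fun x => op x y
  medial : ∀ w x y z, op (op w x) (op y z) = op (op w y) (op x z)

/-- A quandle structure on a type `T`. -/
structure QuandleStr (T : Type*) where
  op : T → T → T
  idem : ∀ x, op x x = x
  bij : ∀ y, Function.Bijective fun x => op x y
  distrib : ∀ x y z, op (op x y) z = op (op x z) (op y z)

namespace MedialQuandleStr

variable {Q : Type*} (s : MedialQuandleStr Q)

/-- The translation `β_y : x ↦ x ▷ y`, as a permutation of `Q`. -/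
def β (y : Q) : Equiv.Perm Q := Equiv.ofBijective _ (s.bij y)

/-- `β(Q)`: the subgroup of permutations generated by the translations. -/
def transGroup : Subgroup (Equiv.Perm Q) := Subgroup.closure (Set.range s.β)

/-- The displacement group `Dis(Q)`, generated by the elementary displacements
`β_y β_z⁻¹`. -/
def Dis : Subgroup (Equiv.Perm Q) :=
  Subgroup.closure {d : Equiv.Perm Q | ∃ y z, d = s.β y * (s.β z)⁻¹}

/-- The orbit of `q`: the smallest subset of `Q` containing `q` and closed under the
action of `β(Q)`. -/
def orbit (q : Q) : Set Q := {x | ∃ g ∈ s.transGroup, g q = x}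

end MedialQuandleStr

section Construction

variable {M : Type*} [AddCommGroup M] [Module Λ M] {I : Type*}

/-- The carrier of the quandle `Q(N,(m_i),(X_i))`: the disjoint union of the quotients
`Q_i = N/X_i`. -/
def QCar (N : Submodule Λ M) (X : I → Submodule Λ ↥N) : Type _ :=
  Σ i : I, ↥N ⧸ X i

/-- The condition `(1-t)·X_i = 0` for all `i`. -/
def annCond (N : Submodule Λ M) (X : I → Submodule Λ ↥N) : Prop :=
  ∀ i, ∀ x ∈ X i, (1 - tL) • (x : ↥N) = 0

/-- Multiplication by `1-t`, descended from `N/X_j` to `N` (well defined since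
`(1-t)·X_j = 0`). -/
def oneSubT (N : Submodule Λ M) {X : I → Submodule Λ ↥N} (h : annCond N X) (j : I) :
    (↥N ⧸ X j) →ₗ[Λ] ↥N :=
  Submodule.liftQ (X j) ((1 - tL) • (LinearMap.id : ↥N →ₗ[Λ] ↥N))
    (fun x hx => by simpa using h j x hx)

/-- The operation of `Q(N,(m_i),(X_i))`: for `x ∈ Q_i` and `y ∈ Q_j`,
`x ▷ y = m_j - m_i + t·x + (1-t)·y + X_i ∈ Q_i`. -/
def qop (N : Submodule Λ M) (m : I → M) {X : I → Submodule Λ ↥N}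
    (hm : ∀ i j, m i - m j ∈ N) (h : annCond N X) :
    QCar N X → QCar N X → QCar N X :=
  fun x y =>
    ⟨x.1, Submodule.Quotient.mk (⟨m y.1 - m x.1, hm y.1 x.1⟩ : ↥N)
        + tL • x.2 + Submodule.Quotient.mk (oneSubT N h y.1 y.2)⟩

end Construction

/-- Every quasi-affine quandle is semiregular. Here a quasi-affine
quandle is a quandle `Q` isomorphic (via an injective map `g` preserving the operation)
to a subquandle of the affine quandle `x ▷ y = t·x + (1-t)·y` on a `Λ`-module `M`.
Every displacement of such a quandle is of the form `x ↦ x + v` (read through `g`),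
and the only displacement with a fixed point is the identity. -/
theorem stmt15 {Q : Type*} (s : MedialQuandleStr Q)
    {M : Type*} [AddCommGroup M] [Module Λ M]
    (g : Q → M) (hg : Function.Injective g)
    (hhom : ∀ x y, g (s.op x y) = tL • g x + (1 - tL) • g y) :
    (∀ d ∈ s.Dis, ∃ v : M, ∀ x, g (d x) = g x + v) ∧
    (∀ d ∈ s.Dis, (∃ x, d x = x) → d = 1) := by
  have key : ∀ d ∈ s.Dis, ∃ v : M, ∀ x, g (d x) = g x + v := by
    intro d hd
    refine Subgroup.closure_induction ?_ ?_ ?_ ?_ hd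
    · rintro d ⟨y, z, rfl⟩
      refine ⟨(1 - tL) • g y - (1 - tL) • g z, fun x => ?_⟩
      set w := (s.β z)⁻¹ x with hw
      have hzw : s.op w z = x := by
        show (s.β z) w = x
        simp [hw]
      have h1 : tL • g w = g x - (1 - tL) • g z := by
        have := hhom w z
        rw [hzw] at this
        rw [this]; abel
      have h2 : (s.β y * (s.β z)⁻¹) x = s.op w y := rfl
      rw [h2, hhom w y, h1]
      abel
    · exact ⟨0, fun x => by simp⟩
    · rintro a b _ _ ⟨va, hva⟩ ⟨vb, hvb⟩
      refine ⟨vb + va, fun x => ?_⟩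
      have : (a * b) x = a (b x) := rfl
      rw [this, hva, hvb]; abel
    · rintro a _ ⟨va, hva⟩
      refine ⟨-va, fun x => ?_⟩
      have := hva (a⁻¹ x)
      rw [show a (a⁻¹ x) = x from a.apply_symm_apply x] at this
      rw [this]; abel
  refine ⟨key, fun d hd ⟨x, hx⟩ => ?_⟩
  obtain ⟨v, hv⟩ := key d hd
  have hv0 : v = 0 := by
    have := hv x
    rw [hx] at this
    have := this.symm
    simpa using this
  ext y
  apply hg
  rw [hv y, hv0, add_zero]
  rfl
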